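/- Let B₁ = a + p^r ℤ_p be a ball in ℚ_p, κ ∈ ℤ, and F : B₁ → ℚ_p a function satisfying v(F(x) - F(y)) = κ + v(x - y) for all x ≠ y in B₁. Then F is injective and F(B₁) is exactly the ball F(a) + p^{r+κ}ℤ_p. -/

import Mathlib

section Stmt10Aux

variable {p : ℕ} [Fact p.Prime]

lemma stmt10_val_of_norm {u : ℚ_[p]} (hu : u ≠ 0) {m : ℤ}
    (hn : ‖u‖ = (p : ℝ) ^ (-m)) : u.valuation = m := by
  have hp1 : (1 : ℝ) < p := Nat.one_lt_cast.mpr (Fact.out (p := p.Prime)).one_lt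
  have hp0 : (0 : ℝ) < p := lt_trans one_pos hp1
  have h2 : (p : ℝ) ^ (-u.valuation) = (p : ℝ) ^ (-m) := by
    rw [← Padic.norm_eq_zpow_neg_valuation hu, hn]
  have := zpow_right_injective₀ hp0 hp1.ne' h2
  omega

lemma stmt10_val_ge {u : ℚ_[p]} (hu : u ≠ 0) {m : ℤ}
    (hn : ‖u‖ ≤ (p : ℝ) ^ (-m)) : m ≤ u.valuation := by
  have hp1 : (1 : ℝ) < p := Nat.one_lt_cast.mpr (Fact.out (p := p.Prime)).one_lt
  rw [Padic.norm_eq_zpow_neg_valuation hu] at hn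
  have := (zpow_le_zpow_iff_right₀ hp1).mp hn
  omega

end Stmt10Aux

/-- If `F` on the ball `B₁ = a + p^rℤ_p` satisfies
`v(F x - F y) = κ + v(x - y)` for all `x ≠ y` in `B₁`, then `F` is injective on `B₁` and
`F(B₁)` is exactly the ball `F(a) + p^{r+κ}ℤ_p`. -/
theorem stmt10 (p : ℕ) [Fact p.Prime] (a : ℚ_[p]) (r κ : ℤ) (F : ℚ_[p] → ℚ_[p])
    (h : ∀ x ∈ {x : ℚ_[p] | ‖x - a‖ ≤ (p : ℝ) ^ (-r)},
         ∀ y ∈ {x : ℚ_[p] | ‖x - a‖ ≤ (p : ℝ) ^ (-r)}, x ≠ y →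
      (F x - F y).valuation = κ + (x - y).valuation) :
    Set.InjOn F {x : ℚ_[p] | ‖x - a‖ ≤ (p : ℝ) ^ (-r)} ∧
    F '' {x : ℚ_[p] | ‖x - a‖ ≤ (p : ℝ) ^ (-r)} =
      {z : ℚ_[p] | ‖z - F a‖ ≤ (p : ℝ) ^ (-(r + κ))} := by
  have hpprime : p.Prime := Fact.out
  have hp1 : (1 : ℝ) < p := Nat.one_lt_cast.mpr hpprime.one_lt
  have hp0 : (0 : ℝ) < p := lt_trans one_pos hp1
  have hpq0 : (p : ℚ_[p]) ≠ 0 := Nat.cast_ne_zero.mpr hpprime.ne_zero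
  have hmul : ∀ s t : ℤ, (p : ℝ) ^ s * (p : ℝ) ^ t = (p : ℝ) ^ (s + t) :=
    fun s t => (zpow_add₀ hp0.ne' s t).symm
  set B : Set ℚ_[p] := {x : ℚ_[p] | ‖x - a‖ ≤ (p : ℝ) ^ (-r)} with hB
  have hmemB : ∀ x : ℚ_[p], x ∈ B ↔ ‖x - a‖ ≤ (p : ℝ) ^ (-r) := fun x => Iff.rfl
  have haB : a ∈ B := by
    rw [hmemB]; simp only [sub_self, norm_zero]
    exact (zpow_pos hp0 _).le
  -- distance bound inside the ball
  have hdist : ∀ x ∈ B, ∀ y ∈ B, ‖x - y‖ ≤ (p : ℝ) ^ (-r) := by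
    intro x hx y hy
    have hxy : x - y = (x - a) + -(y - a) := by ring
    rw [hxy]
    refine le_trans (Padic.nonarchimedean _ _) (max_le hx ?_)
    rw [norm_neg]; exact hy
  -- injectivity
  have hinj : Set.InjOn F B := by
    intro x hx y hy hFxy
    by_contra hxy
    have hne : x - y ≠ 0 := sub_ne_zero.mpr hxy
    set v : ℤ := (x - y).valuation with hv
    have hrv : r ≤ v := stmt10_val_ge hne (hdist x hx y hy)
    set w : ℚ_[p] := (p : ℚ_[p]) ^ (v + 1) with hw
    have hwne : w ≠ 0 := zpow_ne_zero _ hpq0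
    have hwnorm : ‖w‖ = (p : ℝ) ^ (-(v + 1)) := Padic.norm_p_zpow _
    set z := x + w with hzdef
    have hzB : z ∈ B := by
      rw [hmemB]
      have hza : z - a = (x - a) + w := by ring
      rw [hza]
      refine le_trans (Padic.nonarchimedean _ _) (max_le hx ?_)
      rw [hwnorm]
      exact (zpow_le_zpow_iff_right₀ hp1).mpr (by omega)
    have hzx : z ≠ x := by
      intro hc
      apply hwne
      have : x + w - x = 0 := by rw [← hzdef, hc, sub_self]
      simpa using this
    have hnxy : ‖x - y‖ = (p : ℝ) ^ (-v) := Padic.norm_eq_zpow_neg_valuation hne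
    have hzy_norm : ‖z - y‖ = (p : ℝ) ^ (-v) := by
      have hzy : z - y = (x - y) + w := by ring
      rw [hzy, Padic.add_eq_max_of_ne, hnxy, hwnorm]
      · exact max_eq_left ((zpow_le_zpow_iff_right₀ hp1).mpr (by omega))
      · rw [hnxy, hwnorm]
        intro hc
        have := zpow_right_injective₀ hp0 hp1.ne' hc
        omega
    have hzyne : z ≠ y := by
      intro hc
      rw [hc, sub_self, norm_zero] at hzy_norm
      exact absurd hzy_norm.symm (ne_of_gt (zpow_pos hp0 _))
    have h1 := h z hzB x hx hzx
    have h2 := h z hzB y hy hzyne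
    rw [hFxy] at h1
    have hzxval : (z - x).valuation = v + 1 := by
      have : z - x = w := by rw [hzdef]; ring
      rw [this]
      exact stmt10_val_of_norm hwne hwnorm
    have hzyval : (z - y).valuation = v :=
      stmt10_val_of_norm (sub_ne_zero.mpr hzyne) hzy_norm
    rw [hzxval] at h1
    rw [hzyval] at h2
    omega
  -- norm identity
  have hFnorm : ∀ x ∈ B, ∀ y ∈ B, ‖F x - F y‖ = (p : ℝ) ^ (-κ) * ‖x - y‖ := by
    intro x hx y hy
    rcases eq_or_ne x y with rfl | hxy
    · simp
    · have hne : x - y ≠ 0 := sub_ne_zero.mpr hxy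
      have hFne : F x - F y ≠ 0 := sub_ne_zero.mpr fun hc => hxy (hinj hx hy hc)
      rw [Padic.norm_eq_zpow_neg_valuation hFne, Padic.norm_eq_zpow_neg_valuation hne, h x hx y hy hxy,
        neg_add, zpow_add₀ hp0.ne']
  -- image is contained in the target ball
  have hsub : ∀ x ∈ B, ‖F x - F a‖ ≤ (p : ℝ) ^ (-(r + κ)) := by
    intro x hx
    rw [hFnorm x hx a haB]
    calc (p : ℝ) ^ (-κ) * ‖x - a‖ ≤ (p : ℝ) ^ (-κ) * (p : ℝ) ^ (-r) :=
          mul_le_mul_of_nonneg_left hx (zpow_pos hp0 _).le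
      _ = (p : ℝ) ^ (-(r + κ)) := by rw [hmul]; congr 1; ring
  refine ⟨hinj, Set.Subset.antisymm ?_ ?_⟩
  · rintro _ ⟨x, hx, rfl⟩
    exact hsub x hx
  · -- surjectivity
    intro z hz
    rw [Set.mem_setOf_eq] at hz
    -- approximation at level n
    have happrox : ∀ n : ℕ, ∃ x ∈ B, ‖F x - z‖ * (p : ℝ) ^ (r + κ) ≤ (p : ℝ) ^ (-(n : ℤ)) := by
      intro n
      haveI : NeZero (p ^ n) := ⟨pow_ne_zero n hpprime.ne_zero⟩
      set π : ℚ_[p] := (p : ℚ_[p]) ^ (-(r + κ)) with hπ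
      have hπnorm : ‖π‖ = (p : ℝ) ^ (r + κ) := by
        rw [hπ, Padic.norm_p_zpow, neg_neg]
      have hone : (p : ℝ) ^ (-(r + κ)) * (p : ℝ) ^ (r + κ) = 1 := by
        rw [hmul, show -(r + κ) + (r + κ) = 0 by ring, zpow_zero]
      have hkey : ∀ u : ℚ_[p], ‖u * π‖ = ‖u‖ * (p : ℝ) ^ (r + κ) := by
        intro u; rw [norm_mul, hπnorm]
      -- points indexed by residues
      set xc : ZMod (p ^ n) → ℚ_[p] :=
        fun c => a + ((c.val : ℤ) : ℚ_[p]) * (p : ℚ_[p]) ^ r with hxc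
      have hxcB : ∀ c, xc c ∈ B := by
        intro c
        rw [hmemB]
        have : xc c - a = ((c.val : ℤ) : ℚ_[p]) * (p : ℚ_[p]) ^ r := by rw [hxc]; ring
        rw [this, norm_mul, Padic.norm_p_zpow]
        calc ‖((c.val : ℤ) : ℚ_[p])‖ * (p : ℝ) ^ (-r)
            ≤ 1 * (p : ℝ) ^ (-r) :=
              mul_le_mul_of_nonneg_right (Padic.norm_int_le_one _) (zpow_pos hp0 _).le
          _ = (p : ℝ) ^ (-r) := one_mul _
      have hA : ∀ c, ‖(F (xc c) - F a) * π‖ ≤ 1 := by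
        intro c
        rw [hkey]
        calc ‖F (xc c) - F a‖ * (p : ℝ) ^ (r + κ)
            ≤ (p : ℝ) ^ (-(r + κ)) * (p : ℝ) ^ (r + κ) :=
              mul_le_mul_of_nonneg_right (hsub _ (hxcB c)) (zpow_pos hp0 _).le
          _ = 1 := hone
      set A : ZMod (p ^ n) → ℤ_[p] := fun c => ⟨(F (xc c) - F a) * π, hA c⟩ with hAdef
      set φ : ZMod (p ^ n) → ZMod (p ^ n) :=
        fun c => PadicInt.toZModPow n (A c) with hφ
      -- a general "closeness" consequence of equal residues
      have hclose : ∀ (u : ℤ_[p]), PadicInt.toZModPow n u = 0 →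
          ‖(u : ℚ_[p])‖ ≤ (p : ℝ) ^ (-(n : ℤ)) := by
        intro u hu
        have hker : u ∈ RingHom.ker (PadicInt.toZModPow (p := p) n) := hu
        rw [PadicInt.ker_toZModPow] at hker
        have := (PadicInt.norm_le_pow_iff_mem_span_pow u n).mpr hker
        rwa [PadicInt.norm_def] at this
      have hφinj : Function.Injective φ := by
        intro c c' hcc
        have hcc' : PadicInt.toZModPow n (A c) = PadicInt.toZModPow n (A c') := hcc
        have hker : PadicInt.toZModPow n (A c - A c') = 0 := by
          rw [map_sub, hcc', sub_self]
        have hle := hclose _ hker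
        have hcoord : ((A c - A c' : ℤ_[p]) : ℚ_[p])
            = (F (xc c) - F (xc c')) * π := by
          show (F (xc c) - F a) * π - (F (xc c') - F a) * π = _
          ring
        rw [hcoord, hkey, hFnorm _ (hxcB c) _ (hxcB c')] at hle
        have hxcdiff : xc c - xc c' = ((c.val : ℤ) - (c'.val : ℤ) : ℤ) * (p : ℚ_[p]) ^ r := by
          rw [hxc]; push_cast; ring
        rw [hxcdiff, norm_mul, Padic.norm_p_zpow] at hle
        have hd : ‖(((c.val : ℤ) - (c'.val : ℤ) : ℤ) : ℚ_[p])‖ ≤ (p : ℝ) ^ (-(n : ℤ)) := by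
          have hfac : (p : ℝ) ^ (-κ) * ((p : ℝ) ^ (-r)) * (p : ℝ) ^ (r + κ) = 1 := by
            rw [hmul, hmul, show -κ + -r + (r + κ) = 0 by ring, zpow_zero]
          calc ‖(((c.val : ℤ) - (c'.val : ℤ) : ℤ) : ℚ_[p])‖
              = (p : ℝ) ^ (-κ) * (‖(((c.val : ℤ) - (c'.val : ℤ) : ℤ) : ℚ_[p])‖
                  * (p : ℝ) ^ (-r)) * (p : ℝ) ^ (r + κ) := by
                  rw [show (p : ℝ) ^ (-κ) * (‖(((c.val : ℤ) - (c'.val : ℤ) : ℤ) : ℚ_[p])‖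
                      * (p : ℝ) ^ (-r)) * (p : ℝ) ^ (r + κ)
                      = ‖(((c.val : ℤ) - (c'.val : ℤ) : ℤ) : ℚ_[p])‖
                        * ((p : ℝ) ^ (-κ) * ((p : ℝ) ^ (-r)) * (p : ℝ) ^ (r + κ)) by ring,
                    hfac, mul_one]
            _ ≤ (p : ℝ) ^ (-(n : ℤ)) := hle
        have hdvd : ((p : ℤ) ^ n) ∣ ((c.val : ℤ) - (c'.val : ℤ)) :=
          (Padic.norm_int_le_pow_iff_dvd _ _).mp hd
        have hcast : (((c.val : ℤ) - (c'.val : ℤ) : ℤ) : ZMod (p ^ n)) = 0 := by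
          rw [ZMod.intCast_zmod_eq_zero_iff_dvd]
          exact_mod_cast hdvd
        push_cast at hcast
        rw [ZMod.natCast_zmod_val, ZMod.natCast_zmod_val, sub_eq_zero] at hcast
        exact hcast
      have hφsurj : Function.Surjective φ := Finite.surjective_of_injective hφinj
      have hzπ : ‖(z - F a) * π‖ ≤ 1 := by
        rw [hkey]
        calc ‖z - F a‖ * (p : ℝ) ^ (r + κ)
            ≤ (p : ℝ) ^ (-(r + κ)) * (p : ℝ) ^ (r + κ) :=
              mul_le_mul_of_nonneg_right hz (zpow_pos hp0 _).le
          _ = 1 := hone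
      obtain ⟨c, hc⟩ := hφsurj (PadicInt.toZModPow n ⟨(z - F a) * π, hzπ⟩)
      have hc' : PadicInt.toZModPow n (A c)
          = PadicInt.toZModPow n ⟨(z - F a) * π, hzπ⟩ := hc
      refine ⟨xc c, hxcB c, ?_⟩
      have hker : PadicInt.toZModPow n (A c - ⟨(z - F a) * π, hzπ⟩) = 0 := by
        have := map_sub (PadicInt.toZModPow (p := p) n) (A c) (⟨(z - F a) * π, hzπ⟩ : ℤ_[p])
        rw [hc', sub_self] at this
        exact this
      have hle := hclose _ hker
      have hcoord : ((A c - ⟨(z - F a) * π, hzπ⟩ : ℤ_[p]) : ℚ_[p])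
          = (F (xc c) - z) * π := by
        show (F (xc c) - F a) * π - (z - F a) * π = _
        ring
      rw [hcoord, hkey] at hle
      exact hle
    -- pass to the limit via compactness
    have hBcb : B = Metric.closedBall a ((p : ℝ) ^ (-r)) := by
      ext x; simp [hB, Metric.mem_closedBall, dist_eq_norm]
    have hBcompact : IsCompact B := by
      rw [hBcb]; exact isCompact_closedBall a _
    have hFcont : ContinuousOn F B := by
      rw [Metric.continuousOn_iff]
      intro b hb ε hε
      refine ⟨ε * (p : ℝ) ^ κ, mul_pos hε (zpow_pos hp0 _), ?_⟩
      intro x hx hd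
      have : dist (F x) (F b) = (p : ℝ) ^ (-κ) * dist x b := by
        rw [dist_eq_norm, dist_eq_norm, hFnorm x hx b hb]
      rw [this]
      calc (p : ℝ) ^ (-κ) * dist x b < (p : ℝ) ^ (-κ) * (ε * (p : ℝ) ^ κ) :=
            (mul_lt_mul_iff_right₀ (zpow_pos hp0 _)).mpr hd
        _ = ε * ((p : ℝ) ^ (-κ) * (p : ℝ) ^ κ) := by ring
        _ = ε := by rw [hmul]; simp
    have hclosed : IsClosed (F '' B) := (hBcompact.image_of_continuousOn hFcont).isClosed
    have hzcl : z ∈ closure (F '' B) := by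
      rw [Metric.mem_closure_iff]
      intro ε hε
      obtain ⟨n, hn⟩ := PadicInt.exists_pow_neg_lt p (mul_pos hε (zpow_pos hp0 (r + κ)))
      obtain ⟨x, hxB, hx⟩ := happrox n
      refine ⟨F x, Set.mem_image_of_mem F hxB, ?_⟩
      rw [dist_eq_norm, ← norm_sub_rev]
      have hlt : ‖F x - z‖ * (p : ℝ) ^ (r + κ) < ε * (p : ℝ) ^ (r + κ) :=
        lt_of_le_of_lt hx hn
      exact (mul_lt_mul_iff_left₀ (zpow_pos hp0 _)).mp hlt
    rwa [hclosed.closure_eq] at hzcl
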